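/- Let 𝔤 be a finite-dimensional semisimple Lie algebra over an algebraically closed field 𝔽 of characteristic not 2 or 3, and let (ρ, V) be a representation of 𝔤 such that the trivial representation is not a subrepresentation of (ρ, V) (i.e., there is no nonzero v ∈ V with ρ(x)v = 0 for all x ∈ 𝔤). Then any linear kernel vector ψ defines a homomorphism of representations from the adjoint representation (ad, 𝔤) to (ρ, V): for every x, y ∈ 𝔤, ψ([x,y]) − ρ(x)ψ(y) = 0. -/

import Mathlib

attribute [local instance] LieRing.ofAssociativeRing

namespace LKVaux

variable {𝔽 : Type*} [Field 𝔽] {𝔤 V : Type*} [LieRing 𝔤] [LieAlgebra 𝔽 𝔤]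
  [AddCommGroup V] [Module 𝔽 V]

variable (ρ : 𝔤 →ₗ⁅𝔽⁆ Module.End 𝔽 V) (ψ : 𝔤 →ₗ[𝔽] V)

/-- `F y z = ψ⁅y,z⁆ - ρ y (ψ z)`. -/
def Fk (y z : 𝔤) : V := ψ ⁅y, z⁆ - ρ y (ψ z)

lemma expand (p q : 𝔤) (w : V) : ρ ⁅p, q⁆ w = ρ p (ρ q w) - ρ q (ρ p w) := by
  rw [LieHom.map_lie, Ring.lie_def, LinearMap.sub_apply, Module.End.mul_apply,
    Module.End.mul_apply]

variable {ρ ψ} (hψ : ∀ x : 𝔤, ρ x (ψ x) = 0)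
include hψ

lemma pol (u v : 𝔤) : ρ u (ψ v) = - ρ v (ψ u) := by
  have h := hψ (u + v)
  simp only [map_add, LinearMap.add_apply, hψ u, hψ v] at h
  linear_combination (norm := module) h

lemma pol2 (p u v : 𝔤) : ρ p (ρ u (ψ v)) = - ρ p (ρ v (ψ u)) := by
  rw [pol hψ u v, map_neg]

lemma pol3 (p q u v : 𝔤) : ρ p (ρ q (ρ u (ψ v))) = - ρ p (ρ q (ρ v (ψ u))) := by
  rw [pol hψ u v, map_neg, map_neg]

lemma FkAnti (y z : 𝔤) : Fk ρ ψ y z = - Fk ρ ψ z y := by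
  rw [Fk, Fk, ← lie_skew, map_neg, pol hψ z y]
  module

lemma L2 (u v w : 𝔤) : ρ u (Fk ρ ψ v w) = - ρ v (Fk ρ ψ u w) := by
  have p1 := pol hψ u ⁅v, w⁆
  have p2 := pol hψ v ⁅u, w⁆
  have p3 := pol2 hψ v w u
  have p4 := pol2 hψ u w v
  have p5 := pol2 hψ w u v
  rw [expand] at p1 p2
  rw [Fk, Fk, map_sub, map_sub]
  linear_combination (norm := module) p1 + p2 - p3 - p4 + p5


lemma L3 (h2 : (2:𝔽) ≠ 0) (a b c d : 𝔤) :
    ρ ⁅a, b⁆ (Fk ρ ψ c d) = ρ d (ρ a (Fk ρ ψ b c)) - ρ c (ρ a (Fk ρ ψ b d)) := by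
  apply smul_right_injective V h2
  show (2:𝔽) • _ = (2:𝔽) • _
  have e0 := pol hψ ⁅a, b⁆ ⁅c, d⁆
  have e1 := pol hψ ⁅a, c⁆ ⁅b, d⁆
  have e2 := pol hψ ⁅a, d⁆ ⁅b, c⁆
  have e3 := pol2 hψ a b ⁅c, d⁆
  have e4 := pol2 hψ a c ⁅b, d⁆
  have e5 := pol2 hψ a d ⁅b, c⁆
  have e6 := pol2 hψ b a ⁅c, d⁆
  have e7 := pol2 hψ b c ⁅a, d⁆
  have e8 := pol2 hψ b d ⁅a, c⁆
  have e9 := pol2 hψ c a ⁅b, d⁆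
  have e10 := pol2 hψ c b ⁅a, d⁆
  have e11 := pol2 hψ c d ⁅a, b⁆
  have e12 := pol2 hψ d a ⁅b, c⁆
  have e13 := pol2 hψ d b ⁅a, c⁆
  have e14 := pol2 hψ d c ⁅a, b⁆
  have e15 := pol3 hψ a b c d
  have e16 := pol3 hψ a c b d
  have e17 := pol3 hψ a d b c
  have e18 := pol3 hψ b a c d
  have e19 := pol3 hψ b c a d
  have e20 := pol3 hψ b d a c
  have e21 := pol3 hψ c a b d
  have e22 := pol3 hψ c b a d
  have e23 := pol3 hψ c d a b
  have e24 := pol3 hψ d a b c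
  have e25 := pol3 hψ d b a c
  have e26 := pol3 hψ d c a b
  simp only [Fk, map_sub, expand ρ] at *
  linear_combination (norm := module) e0 - e1 + e2 + e3 + e4 - e5 - e6 - e7 + e8 + e9 + e10 - e11 - e12 - e13 + e14 - e15 - e16 + e17 + e18 + e19 - e20 - e21 - e22 + e23 + e24 + e25 - e26


lemma L4 (h2 : (2:𝔽) ≠ 0) (u v x y z : 𝔤) :
    ρ ⁅u, v⁆ (ρ x (Fk ρ ψ y z)) =
      ρ ⁅x, z⁆ (ρ u (Fk ρ ψ v y)) - ρ ⁅x, y⁆ (ρ u (Fk ρ ψ v z))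
        + ρ ⁅z, y⁆ (ρ u (Fk ρ ψ v x)) := by
  have hA := congrArg (ρ x) (L3 hψ h2 u v y z)
  have hB := L3 hψ h2 ⁅u, v⁆ x y z
  have hC := congrArg (ρ z) (L3 hψ h2 u v x y)
  have hD := congrArg (ρ y) (L3 hψ h2 u v x z)
  simp only [map_sub, expand ρ] at hA hB hC hD ⊢
  linear_combination (norm := module) hA + hB + hC - hD

lemma Osw1 (a b c d e : 𝔤) :
    ρ ⁅a, b⁆ (ρ c (Fk ρ ψ d e)) = - ρ ⁅b, a⁆ (ρ c (Fk ρ ψ d e)) := by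
  rw [← (lie_skew a b : -⁅b, a⁆ = ⁅a, b⁆), map_neg, LinearMap.neg_apply]

lemma Osw2 (a b c d e : 𝔤) :
    ρ ⁅a, b⁆ (ρ c (Fk ρ ψ d e)) = - ρ ⁅a, b⁆ (ρ d (Fk ρ ψ c e)) := by
  rw [L2 hψ c d e, map_neg]

lemma Osw3 (a b c d e : 𝔤) :
    ρ ⁅a, b⁆ (ρ c (Fk ρ ψ d e)) = - ρ ⁅a, b⁆ (ρ c (Fk ρ ψ e d)) := by
  rw [FkAnti hψ d e, map_neg, map_neg]

lemma Omega_zero (h2 : (2:𝔽) ≠ 0) (h8 : (8:𝔽) ≠ 0) (u v x y z : 𝔤) :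
    ρ ⁅u, v⁆ (ρ x (Fk ρ ψ y z)) = 0 := by
  apply smul_right_injective V h8
  show (8:𝔽) • _ = (8:𝔽) • _
  rw [smul_zero]
  have o0 := Osw2 hψ u v x y z
  have o1 := Osw3 hψ u v x y z
  have o2 := Osw1 hψ u v x z y
  have o3 := L4 hψ h2 u v x z y
  have o4 := Osw3 hψ u v y x z
  have o5 := Osw2 hψ u x v y z
  have o6 := Osw3 hψ u x v y z
  have o7 := L4 hψ h2 u x v z y
  have o8 := Osw3 hψ u x y v z
  have o9 := Osw2 hψ u y v x z
  have o10 := Osw3 hψ u y v x z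
  have o11 := L4 hψ h2 u y v z x
  have o12 := Osw3 hψ u y x v z
  have o13 := Osw2 hψ u z v x y
  have o14 := Osw3 hψ u z v x y
  have o15 := L4 hψ h2 u z v y x
  have o16 := Osw3 hψ u z x v y
  have o17 := L4 hψ h2 v u x z y
  have o18 := Osw2 hψ v x u y z
  have o19 := Osw3 hψ v x u y z
  have o20 := L4 hψ h2 v x u z y
  have o21 := Osw3 hψ v x y u z
  have o22 := Osw1 hψ v x y z u
  have o23 := Osw2 hψ v y u x z
  have o24 := Osw3 hψ v y u x z
  have o25 := L4 hψ h2 v y u z x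
  have o26 := Osw3 hψ v y x u z
  have o27 := Osw1 hψ v y x z u
  have o28 := Osw2 hψ v z u x y
  have o29 := Osw3 hψ v z u x y
  have o30 := L4 hψ h2 v z u y x
  have o31 := Osw3 hψ v z x u y
  have o32 := Osw1 hψ v z x y u
  have o33 := Osw3 hψ x y u v z
  have o34 := L4 hψ h2 x y u v z
  have o35 := Osw3 hψ x y v u z
  have o36 := Osw3 hψ x z u v y
  have o37 := L4 hψ h2 x z u v y
  have o38 := Osw3 hψ x z v u y
  have o39 := Osw3 hψ y z u v x
  have o40 := L4 hψ h2 y z u v x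
  have o41 := Osw3 hψ y z v u x
  linear_combination (norm := module) (3:𝔽) • o0 + (2:𝔽) • o1 - (1:𝔽) • o2 + (2:𝔽) • o3 - (3:𝔽) • o4 - (3:𝔽) • o5 + (2:𝔽) • o6 - (1:𝔽) • o7 + (3:𝔽) • o8 + (3:𝔽) • o9 - (2:𝔽) • o10 + (1:𝔽) • o11 - (3:𝔽) • o12 - (3:𝔽) • o13 + (2:𝔽) • o14 - (1:𝔽) • o15 + (3:𝔽) • o16 + (1:𝔽) • o17 + (3:𝔽) • o18 - (2:𝔽) • o19 + (1:𝔽) • o20 - (3:𝔽) • o21 + (3:𝔽) • o22 - (3:𝔽) • o23 + (2:𝔽) • o24 - (1:𝔽) • o25 + (3:𝔽) • o26 - (3:𝔽) • o27 + (3:𝔽) • o28 - (2:𝔽) • o29 + (1:𝔽) • o30 - (3:𝔽) • o31 + (3:𝔽) • o32 - (1:𝔽) • o33 + (3:𝔽) • o34 + (1:𝔽) • o35 + (1:𝔽) • o36 - (3:𝔽) • o37 - (1:𝔽) • o38 - (1:𝔽) • o39 + (3:𝔽) • o40 + (1:𝔽) • o41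

end LKVaux


/-- For a finite-dimensional semisimple Lie algebra over an algebraically closed field of
characteristic not 2 or 3, and a representation with no trivial subrepresentation, every
linear kernel vector is a homomorphism from the adjoint representation:
`ψ([x,y]) − ρ(x)ψ(y) = 0`. -/
theorem linearKernelVector_equivariant_of_semisimple {𝔽 : Type*} [Field 𝔽] [IsAlgClosed 𝔽]
    (h2 : ringChar 𝔽 ≠ 2) (h3 : ringChar 𝔽 ≠ 3)
    {𝔤 V : Type*} [LieRing 𝔤] [LieAlgebra 𝔽 𝔤] [Module.Finite 𝔽 𝔤]
    [LieAlgebra.IsSemisimple 𝔽 𝔤] [AddCommGroup V] [Module 𝔽 V]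
    (ρ : 𝔤 →ₗ⁅𝔽⁆ Module.End 𝔽 V)
    (htriv : ∀ v : V, (∀ x : 𝔤, ρ x v = 0) → v = 0)
    (ψ : 𝔤 →ₗ[𝔽] V) (hψ : ∀ x : 𝔤, ρ x (ψ x) = 0) :
    ∀ x y : 𝔤, ψ ⁅x, y⁆ - ρ x (ψ y) = 0 := by
  have h2' : (2:𝔽) ≠ 0 := Ring.two_ne_zero h2
  have h8 : (8:𝔽) ≠ 0 := by
    have : (8:𝔽) = 2 ^ 3 := by norm_num
    rw [this]
    exact pow_ne_zero 3 h2'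
  -- Perfectness: ⁅⊤, ⊤⁆ = ⊤
  have perfect : (⁅(⊤ : LieIdeal 𝔽 𝔤), (⊤ : LieIdeal 𝔽 𝔤)⁆ : LieIdeal 𝔽 𝔤) = ⊤ := by
    set D : LieIdeal 𝔽 𝔤 := ⁅(⊤ : LieIdeal 𝔽 𝔤), (⊤ : LieIdeal 𝔽 𝔤)⁆ with hD
    have habel : IsLieAbelian (Dᶜ : LieIdeal 𝔽 𝔤) := by
      rw [LieSubmodule.lie_abelian_iff_lie_self_eq_bot]
      have h1 : (⁅(Dᶜ : LieIdeal 𝔽 𝔤), (Dᶜ : LieIdeal 𝔽 𝔤)⁆ : LieIdeal 𝔽 𝔤) ≤ D := by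
        rw [hD]
        exact LieSubmodule.mono_lie le_top le_top
      have h2'' : (⁅(Dᶜ : LieIdeal 𝔽 𝔤), (Dᶜ : LieIdeal 𝔽 𝔤)⁆ : LieIdeal 𝔽 𝔤) ≤ Dᶜ :=
        LieSubmodule.lie_le_right _ _
      have := le_inf h1 h2''
      rwa [inf_compl_eq_bot, le_bot_iff] at this
    have hbot : (Dᶜ : LieIdeal 𝔽 𝔤) = ⊥ :=
      (LieAlgebra.hasTrivialRadical_iff_no_abelian_ideals 𝔽 𝔤).mp inferInstance _ habel
    have := compl_eq_bot.mp hbot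
    exact this
  -- a vector annihilated by all brackets is annihilated by everything
  have hspan : ∀ (w : V), (∀ a b : 𝔤, ρ ⁅a, b⁆ w = 0) → ∀ t : 𝔤, ρ t w = 0 := by
    intro w hw t
    have ht : t ∈ (⁅(⊤ : LieIdeal 𝔽 𝔤), (⊤ : LieIdeal 𝔽 𝔤)⁆ : LieIdeal 𝔽 𝔤) := by
      rw [perfect]; trivial
    rw [← LieSubmodule.mem_toSubmodule, LieSubmodule.lieIdeal_oper_eq_linear_span] at ht
    induction ht using Submodule.span_induction with
    | mem z hz =>
      obtain ⟨⟨a, -⟩, ⟨b, -⟩, rfl⟩ := hz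
      exact hw a b
    | zero => simp
    | add z₁ z₂ _ _ hz₁ hz₂ => rw [map_add, LinearMap.add_apply, hz₁, hz₂, add_zero]
    | smul c z _ hz => rw [map_smul, LinearMap.smul_apply, hz, smul_zero]
  intro x y
  show LKVaux.Fk ρ ψ x y = 0
  apply htriv
  intro u
  apply htriv
  intro t
  apply hspan
  intro a b
  exact LKVaux.Omega_zero hψ h2' h8 a b u x y
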